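/- Let t ≥ 1 be an integer, let x_1 < x_2 < … < x_t be positive real numbers, and let α_1 < α_2 < … < α_t be non-negative integers. Then the determinant of the t×t matrix whose (i,j) entry is x_j^{α_i} is strictly positive. -/

import Mathlib

open Polynomial Matrix

/-- A nonzero real polynomial has fewer positive roots than nonzero coefficients. -/
lemma rootBound : ∀ (k : ℕ) (p : ℝ[X]), p ≠ 0 → ∀ S : Finset ℝ,
    S.card = k → (∀ y ∈ S, 0 < y ∧ p.eval y = 0) → k < p.support.card := by
  intro k
  induction k with
  | zero =>
    intro p hp S _ _
    simpa [Finset.card_pos, Polynomial.support_nonempty] using hp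
  | succ k ih =>
    intro p hp S hScard hS
    set n := p.natTrailingDegree with hn
    obtain ⟨q, hq⟩ : (X : ℝ[X]) ^ n ∣ p :=
      X_pow_dvd_iff.2 fun d hd => coeff_eq_zero_of_lt_natTrailingDegree (hn ▸ hd)
    clear_value n
    have hco : ∀ d, p.coeff (d + n) = q.coeff d := by
      intro d; rw [hq, coeff_X_pow_mul]
    have hq0 : q.coeff 0 ≠ 0 := by
      have h1 := trailingCoeff_nonzero_iff_nonzero.2 hp
      rw [Polynomial.trailingCoeff, ← hn] at h1
      rw [← hco 0, zero_add]
      exact h1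
    have hqne : q ≠ 0 := fun h => hq0 (by simp [h])
    have hqroot : ∀ y ∈ S, q.eval y = 0 := by
      intro y hy
      obtain ⟨hy0, hyr⟩ := hS y hy
      have : y ^ n * q.eval y = 0 := by
        have h := hyr
        rw [hq, eval_mul, eval_pow, eval_X] at h
        exact h
      rcases mul_eq_zero.1 this with h | h
      · exact absurd h (pow_ne_zero _ hy0.ne')
      · exact h
    -- S is nonempty
    have hSne : S.Nonempty := Finset.card_pos.1 (by omega)
    have hd0 : derivative q ≠ 0 := by
      intro h
      have h1 : q = C (q.coeff 0) := eq_C_of_natDegree_eq_zero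
        (natDegree_eq_zero_of_derivative_eq_zero h)
      obtain ⟨y, hy⟩ := hSne
      have := hqroot y hy
      rw [h1] at this
      simp at this
      exact hq0 this
    -- Rolle between consecutive roots
    let e := S.orderIsoOfFin hScard
    have rolle : ∀ i : Fin k, ∃ c, c ∈ Set.Ioo ((e i.castSucc : ℝ)) (e i.succ) ∧
        (derivative q).eval c = 0 := by
      intro i
      have hlt : ((e i.castSucc : ℝ)) < (e i.succ : ℝ) := by
        exact_mod_cast e.strictMono (Fin.castSucc_lt_succ : i.castSucc < i.succ)
      have hcont : ContinuousOn (fun y => q.eval y) (Set.Icc (e i.castSucc : ℝ) (e i.succ : ℝ)) :=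
        q.continuous_aeval.continuousOn
      have heq : q.eval (e i.castSucc : ℝ) = q.eval (e i.succ : ℝ) := by
        rw [hqroot _ (e i.castSucc).2, hqroot _ (e i.succ).2]
      obtain ⟨c, hc, hc'⟩ := exists_deriv_eq_zero hlt hcont heq
      refine ⟨c, hc, ?_⟩
      rw [← Polynomial.deriv]; exact hc'
    choose g hg hg' using rolle
    have hgmono : StrictMono g := by
      intro i j hij
      have h1 : g i < (e i.succ : ℝ) := (hg i).2
      have h2 : ((e j.castSucc : ℝ)) < g j := (hg j).1
      have h3 : (e i.succ : ℝ) ≤ (e j.castSucc : ℝ) := by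
        have : i.succ ≤ j.castSucc := by
          have hv : (i : ℕ) < (j : ℕ) := hij
          rw [Fin.le_def, Fin.val_succ, Fin.coe_castSucc]
          omega
        exact_mod_cast e.monotone this
      linarith
    have hgpos : ∀ i, 0 < g i := by
      intro i
      have := (hS _ (e i.castSucc).2).1
      have h2 := (hg i).1
      linarith
    set T : Finset ℝ := Finset.image g Finset.univ with hT
    have hTcard : T.card = k := by
      rw [hT, Finset.card_image_of_injective _ hgmono.injective, Finset.card_univ,
        Fintype.card_fin]
    have hkey := ih (derivative q) hd0 T hTcard (by
      intro y hy
      rw [hT, Finset.mem_image] at hy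
      obtain ⟨i, _, rfl⟩ := hy
      exact ⟨hgpos i, hg' i⟩)
    -- support cardinality chain
    have h0supp : 0 ∈ q.support := mem_support_iff.2 hq0
    have hsub : (derivative q).support ⊆ (q.support.erase 0).image (· - 1) := by
      intro i hi
      rw [mem_support_iff, coeff_derivative] at hi
      have : q.coeff (i + 1) ≠ 0 := fun h => hi (by simp [h])
      refine Finset.mem_image.2 ⟨i + 1, Finset.mem_erase.2 ⟨by omega, mem_support_iff.2 this⟩, by omega⟩
    have h1 : (derivative q).support.card ≤ q.support.card - 1 := by
      calc (derivative q).support.card ≤ ((q.support.erase 0).image (· - 1)).card :=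
            Finset.card_le_card hsub
        _ ≤ (q.support.erase 0).card := Finset.card_image_le
        _ = q.support.card - 1 := Finset.card_erase_of_mem h0supp
    have h2 : q.support.card ≤ p.support.card := by
      apply Finset.card_le_card_of_injOn (fun d => d + n)
      · intro d hd
        simp only [Finset.mem_coe, mem_support_iff] at hd ⊢
        rw [hco d]
        exact hd
      · intro a _ b _ hab
        simpa using hab
    have h3 : 0 < q.support.card := Finset.card_pos.2 ⟨0, h0supp⟩
    omega

lemma coeff_sum_C_X_pow {n : ℕ} (a : Fin n → ℝ) (α : Fin n → ℕ)
    (hα : Function.Injective α) (i₀ : Fin n) :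
    (∑ i, C (a i) * X ^ α i).coeff (α i₀) = a i₀ := by
  rw [finset_sum_coeff]
  rw [Finset.sum_eq_single i₀]
  · simp [coeff_X_pow]
  · intro i _ hi
    have : α i ≠ α i₀ := fun h => hi (hα h)
    simp [coeff_C_mul, coeff_X_pow, this, Ne.symm this]
  · simp

/-- Nonvanishing of the generalized Vandermonde determinant. -/
lemma vdm_ne_zero {n : ℕ} (y : Fin n → ℝ) (hy : Function.Injective y)
    (hypos : ∀ j, 0 < y j) (α : Fin n → ℕ) (hα : Function.Injective α) :
    (Matrix.of fun i j => y j ^ α i).det ≠ 0 := by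
  intro h
  set M : Matrix (Fin n) (Fin n) ℝ := Matrix.of fun i j => y j ^ α i with hM
  have hdt : Mᵀ.det = 0 := by rw [Matrix.det_transpose]; exact h
  obtain ⟨a, ha0, ha⟩ := Matrix.exists_mulVec_eq_zero_iff.2 hdt
  set p : ℝ[X] := ∑ i, C (a i) * X ^ α i with hp
  have hpne : p ≠ 0 := by
    obtain ⟨i₀, hi₀⟩ := Function.ne_iff.1 ha0
    intro h
    have := coeff_sum_C_X_pow a α hα i₀
    rw [← hp, h] at this
    simp at this
    exact hi₀ this.symm
  have hroot : ∀ j, p.eval (y j) = 0 := by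
    intro j
    have hj : (Mᵀ.mulVec a) j = 0 := congrFun ha j
    rw [Matrix.mulVec, dotProduct] at hj
    rw [hp, eval_finset_sum]
    simp only [eval_mul, eval_C, eval_pow, eval_X]
    rw [← hj]
    exact Finset.sum_congr rfl fun i _ => by
      simp [hM, Matrix.transpose_apply, mul_comm]
  set S : Finset ℝ := Finset.image y Finset.univ with hSdef
  have hScard : S.card = n := by
    rw [hSdef, Finset.card_image_of_injective _ hy, Finset.card_univ, Fintype.card_fin]
  have hb := rootBound n p hpne S hScard (by
    intro z hz
    rw [hSdef, Finset.mem_image] at hz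
    obtain ⟨j, _, rfl⟩ := hz
    exact ⟨hypos j, hroot j⟩)
  have hsupp : p.support ⊆ Finset.image α Finset.univ := by
    intro m hm
    rw [mem_support_iff, hp, finset_sum_coeff] at hm
    by_contra hc
    apply hm
    apply Finset.sum_eq_zero
    intro i _
    have : α i ≠ m := fun h => hc (Finset.mem_image.2 ⟨i, Finset.mem_univ i, h⟩)
    simp [coeff_C_mul, coeff_X_pow, this, Ne.symm this]
  have : p.support.card ≤ n := by
    calc p.support.card ≤ (Finset.image α Finset.univ).card := Finset.card_le_card hsupp
      _ ≤ (Finset.univ : Finset (Fin n)).card := Finset.card_image_le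
      _ = n := by simp
  omega

theorem stmt15 (t : ℕ) (ht : 1 ≤ t) (x : Fin t → ℝ) (hx : StrictMono x)
    (hxpos : ∀ i, 0 < x i) (α : Fin t → ℕ) (hα : StrictMono α) :
    0 < (Matrix.of fun i j : Fin t => x j ^ α i).det := by
  clear ht
  induction t with
  | zero => simp [Matrix.det_isEmpty]
  | succ t ih =>
    set d : Fin (t + 1) → ℝ := fun i => (-1 : ℝ) ^ ((i : ℕ) + t) *
      (Matrix.of fun k l : Fin t => x l.castSucc ^ α (i.succAbove k)).det with hd
    set p : ℝ[X] := ∑ i, C (d i) * X ^ α i with hp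
    have key : ∀ s : ℝ,
        (Matrix.of fun i j => (Function.update x (Fin.last t) s) j ^ α i).det = p.eval s := by
      intro s
      rw [Matrix.det_succ_column _ (Fin.last t), hp, eval_finset_sum]
      apply Finset.sum_congr rfl
      intro i _
      have hcol : (Matrix.of fun i j => (Function.update x (Fin.last t) s) j ^ α i) i
          (Fin.last t) = s ^ α i := by
        simp [Function.update_self]
      have hsub : (Matrix.of fun i j => (Function.update x (Fin.last t) s) j ^ α i).submatrix
          i.succAbove (Fin.last t).succAbove =
          Matrix.of fun k l : Fin t => x l.castSucc ^ α (i.succAbove k) := by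
        ext k l
        have h1 : (Fin.last t).succAbove l = l.castSucc := by
          rw [Fin.succAbove_last]
        simp only [Matrix.submatrix_apply, Matrix.of_apply, h1]
        rw [Function.update_of_ne (Fin.castSucc_lt_last l).ne]
      rw [hcol, hsub]
      simp only [eval_mul, eval_C, eval_pow, eval_X, hd, Fin.val_last]
      ring
    have hdlast : 0 < d (Fin.last t) := by
      rw [hd]
      have h1 : ((Fin.last t : Fin (t+1)) : ℕ) = t := rfl
      have h2 : (Matrix.of fun k l : Fin t => x l.castSucc ^ α ((Fin.last t).succAbove k)) =
          Matrix.of fun k l : Fin t => (x ∘ Fin.castSucc) l ^ (α ∘ Fin.castSucc) k := by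
        ext k l
        simp [Fin.succAbove_last]
      simp only [h1, h2]
      rw [Even.neg_one_pow ⟨t, rfl⟩, one_mul]
      exact ih (x ∘ Fin.castSucc) (hx.comp Fin.strictMono_castSucc)
        (fun i => hxpos _) (α ∘ Fin.castSucc) (hα.comp Fin.strictMono_castSucc)
    have hcoefflast : p.coeff (α (Fin.last t)) = d (Fin.last t) :=
      coeff_sum_C_X_pow d α hα.injective (Fin.last t)
    have hnd : p.natDegree = α (Fin.last t) := by
      apply le_antisymm
      · rw [hp]
        apply Polynomial.natDegree_sum_le_of_forall_le
        intro i _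
        exact le_trans (natDegree_C_mul_X_pow_le _ _) (hα.monotone (Fin.le_last i))
      · exact le_natDegree_of_ne_zero (hcoefflast ▸ hdlast.ne')
    have hlead : 0 < p.leadingCoeff := by
      rw [Polynomial.leadingCoeff, hnd, hcoefflast]; exact hdlast
    have hpne : p ≠ 0 := fun h => by simp [h] at hlead
    -- nonvanishing for s ≥ x last
    have hnz : ∀ s : ℝ, x (Fin.last t) ≤ s → p.eval s ≠ 0 := by
      intro s hs
      rw [← key s]
      have hunj : Function.Injective (Function.update x (Fin.last t) s) := by
        intro a b hab
        by_cases ha : a = Fin.last t <;> by_cases hb : b = Fin.last t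
        · rw [ha, hb]
        · exfalso
          rw [ha, Function.update_self, Function.update_of_ne hb] at hab
          have := hx (Fin.lt_last_iff_ne_last.2 hb)
          linarith [hab ▸ hs]
        · exfalso
          rw [hb, Function.update_self, Function.update_of_ne ha] at hab
          have := hx (Fin.lt_last_iff_ne_last.2 ha)
          linarith [hab ▸ hs]
        · rw [Function.update_of_ne ha, Function.update_of_ne hb] at hab
          exact hx.injective hab
      have hupos : ∀ j, 0 < Function.update x (Fin.last t) s j := by
        intro j
        by_cases hj : j = Fin.last t
        · rw [hj, Function.update_self]; exact lt_of_lt_of_le (hxpos _) hs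
        · rw [Function.update_of_ne hj]; exact hxpos j
      exact vdm_ne_zero _ hunj hupos α hα.injective
    -- p eventually positive
    have hev : ∀ᶠ s in Filter.atTop, 0 < p.eval s := by
      rcases lt_or_ge 0 p.degree with hdeg | hdeg
      · exact (p.tendsto_atTop_of_leadingCoeff_nonneg hdeg hlead.le).eventually_gt_atTop 0
      · have hc : p = C (p.coeff 0) := eq_C_of_degree_le_zero hdeg
        have h0 : p.natDegree = 0 := natDegree_eq_zero_iff_degree_le_zero.2 hdeg
        have : 0 < p.coeff 0 := by
          rw [← h0]; exact hlead
        filter_upwards with s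
        rw [hc]; simpa using this
    obtain ⟨s₀, hs₀pos, hs₀ge⟩ := (hev.and (Filter.eventually_ge_atTop (x (Fin.last t)))).exists
    have htarget : (Matrix.of fun i j : Fin (t+1) => x j ^ α i).det = p.eval (x (Fin.last t)) := by
      rw [← key (x (Fin.last t)), Function.update_eq_self]
    rw [htarget]
    rcases lt_trichotomy 0 (p.eval (x (Fin.last t))) with h | h | h
    · exact h
    · exact absurd h.symm (hnz _ le_rfl)
    · exfalso
      have hsub : Set.Icc (p.eval (x (Fin.last t))) (p.eval s₀) ⊆
          (fun z => p.eval z) '' Set.Icc (x (Fin.last t)) s₀ :=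
        intermediate_value_Icc hs₀ge (p.continuous_aeval.continuousOn)
      obtain ⟨c, hc, hc0⟩ := hsub ⟨h.le, hs₀pos.le⟩
      exact hnz c hc.1 hc0
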